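/- For every nonzero N ∈ S₂(ℤ) with det N = 0 there exist a matrix A in the subgroup of GL₂(ℤ) generated by r₋₁, r₀, r₁ and a nonzero integer a such that A N Aᵀ = [[a,0],[0,0]]; moreover the integer a is uniquely determined by N. (Every light-cone root of F is Weyl-equivalent to a unique level 0 light-cone root −a(α₀+α₁).) -/

import Mathlib

open Matrix

/-- The simple reflection `r₋₁` as an element of `GL₂(ℤ)`. -/
def um : GL (Fin 2) ℤ := ⟨!![0, 1; 1, 0], !![0, 1; 1, 0], by decide, by decide⟩

/-- The simple reflection `r₀` as an element of `GL₂(ℤ)`. -/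
def u0 : GL (Fin 2) ℤ := ⟨!![-1, 1; 0, 1], !![-1, 1; 0, 1], by decide, by decide⟩

/-- The simple reflection `r₁` as an element of `GL₂(ℤ)`. -/
def u1 : GL (Fin 2) ℤ := ⟨!![1, 0; 0, -1], !![1, 0; 0, -1], by decide, by decide⟩

lemma conj_conj (A B N M : Matrix (Fin 2) (Fin 2) ℤ) (h1 : B * N * Bᵀ = M) :
    (A * B) * N * (A * B)ᵀ = A * M * Aᵀ := by
  rw [← h1, transpose_mul]; simp only [mul_assoc]

lemma base_case (N : Matrix (Fin 2) (Fin 2) ℤ) (hne : N ≠ 0) (hdet : N.det = 0)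
    (hq : N 1 0 = N 0 1) (h11 : N 1 1 = 0) :
    ∃ a : ℤ, a ≠ 0 ∧ ∃ A ∈ Subgroup.closure {um, u0, u1},
      (A : Matrix (Fin 2) (Fin 2) ℤ) * N * ((A : Matrix (Fin 2) (Fin 2) ℤ))ᵀ =
        !![a, 0; 0, 0] := by
  have hd : N.det = N 0 0 * N 1 1 - N 0 1 * N 1 0 := Matrix.det_fin_two N
  have h2 := hdet
  rw [hd, h11, hq] at h2
  have hq0 : N 0 1 = 0 := mul_self_eq_zero.mp (by linarith)
  have hq0' : N 1 0 = 0 := hq.trans hq0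
  have hN : N = !![N 0 0, 0; 0, 0] := by
    ext i j; fin_cases i <;> fin_cases j <;> simp [hq0, h11, hq0']
  refine ⟨N 0 0, ?_, 1, one_mem _, ?_⟩
  · intro h; apply hne; rw [hN, h]; ext i j; fin_cases i <;> fin_cases j <;> simp
  · rw [Units.val_one, Matrix.transpose_one, Matrix.one_mul, Matrix.mul_one]; exact hN

lemma exists_k (q r : ℤ) (hr : r ≠ 0) : ∃ k : ℤ, 2 * |q + k * r| ≤ |r| := by
  have key : ∀ r : ℤ, 0 < r → ∀ q : ℤ, ∃ k : ℤ, 2 * |q + k * r| ≤ |r| := by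
    intro r hr q
    have h0 : 0 ≤ q % r := Int.emod_nonneg q (by omega)
    have h1 : q % r < r := Int.emod_lt_of_pos q hr
    have hqe : q % r = q - r * (q / r) := Int.emod_def q r
    rcases le_or_gt (2 * (q % r)) r with h | h
    · refine ⟨-(q / r), ?_⟩
      have : q + -(q / r) * r = q % r := by rw [hqe]; ring
      rw [this, abs_of_nonneg h0, abs_of_pos hr]; exact h
    · refine ⟨-(q / r) - 1, ?_⟩
      have : q + (-(q / r) - 1) * r = q % r - r := by rw [hqe]; ring
      rw [this, abs_of_nonpos (by omega), abs_of_pos hr]; omega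
  rcases lt_or_gt_of_ne hr with h | h
  · obtain ⟨k, hk⟩ := key (-r) (by omega) q
    refine ⟨-k, ?_⟩
    rw [abs_neg] at hk
    have : q + -k * r = q + k * -r := by ring
    rw [this]; exact hk
  · exact key r h q

def tk (k : ℤ) : GL (Fin 2) ℤ :=
  ⟨!![1, k; 0, 1], !![1, -k; 0, 1],
    by ext i j; fin_cases i <;> fin_cases j <;> simp [Matrix.mul_apply, Fin.sum_univ_two],
    by ext i j; fin_cases i <;> fin_cases j <;> simp [Matrix.mul_apply, Fin.sum_univ_two]⟩

lemma tk_one : tk 1 = (u1 * um)^2 * u0 * u1 := Units.ext (by decide)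

lemma tk_add (a b : ℤ) : tk (a + b) = tk a * tk b := Units.ext (by
  show !![(1:ℤ), a+b; 0, 1] = !![(1:ℤ), a; 0, 1] * !![(1:ℤ), b; 0, 1]
  ext i j; fin_cases i <;> fin_cases j <;> simp [Matrix.mul_apply, Fin.sum_univ_two, add_comm])

lemma um_mem : um ∈ Subgroup.closure {um, u0, u1} := Subgroup.subset_closure (by simp)

lemma tk_mem (k : ℤ) : tk k ∈ Subgroup.closure {um, u0, u1} := by
  have hW : ∀ x ∈ ({um, u0, u1} : Set (GL (Fin 2) ℤ)), x ∈ Subgroup.closure {um, u0, u1} :=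
    fun x hx => Subgroup.subset_closure hx
  have h1 : tk 1 ∈ Subgroup.closure {um, u0, u1} := by
    rw [tk_one]
    exact mul_mem (mul_mem (pow_mem (mul_mem (hW u1 (by simp)) (hW um (by simp))) 2)
      (hW u0 (by simp))) (hW u1 (by simp))
  induction k using Int.induction_on with
  | zero => have : tk 0 = 1 := Units.ext (by decide); rw [this]; exact one_mem _
  | succ n ih => rw [show ((n:ℤ)+1) = (n:ℤ) + 1 from rfl, tk_add]; exact mul_mem ih h1
  | pred n ih =>
      have : tk (-(n:ℤ) - 1) = tk (-(n:ℤ)) * (tk 1)⁻¹ := by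
        rw [eq_mul_inv_iff_mul_eq, ← tk_add]; ring_nf
      rw [this]; exact mul_mem ih (inv_mem h1)

lemma reduce : ∀ n : ℕ, ∀ N : Matrix (Fin 2) (Fin 2) ℤ, N.IsSymm → N ≠ 0 → N.det = 0 →
    (N 1 1).natAbs ≤ n → ∃ a : ℤ, a ≠ 0 ∧ ∃ A ∈ Subgroup.closure {um, u0, u1},
      (A : Matrix (Fin 2) (Fin 2) ℤ) * N * ((A : Matrix (Fin 2) (Fin 2) ℤ))ᵀ =
        !![a, 0; 0, 0] := by
  intro n
  induction n with
  | zero =>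
    intro N hsym hne hdet hb
    have hq : N 1 0 = N 0 1 := hsym.apply 0 1
    exact base_case N hne hdet hq (by omega)
  | succ n ih =>
    intro N hsym hne hdet hb
    have hq : N 1 0 = N 0 1 := hsym.apply 0 1
    by_cases hr : N 1 1 = 0
    · exact base_case N hne hdet hq hr
    · set p := N 0 0 with hp
      set q := N 0 1 with hqd
      set r := N 1 1 with hrd
      obtain ⟨k, hk⟩ := exists_k q r hr
      set q' := q + k * r with hq'
      set p' := p + 2 * k * q + k ^ 2 * r with hp'
      set B : Matrix (Fin 2) (Fin 2) ℤ := !![0, 1; 1, k] with hB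
      set M : Matrix (Fin 2) (Fin 2) ℤ := !![r, q'; q', p'] with hM
      have hN : N = !![p, q; q, r] := by
        ext i j; fin_cases i <;> fin_cases j <;> simp [hq, hp, hqd, hrd]
      have hdet2 : p * r - q * q = 0 := by
        rw [hN] at hdet; rw [Matrix.det_fin_two] at hdet; simpa using hdet
      have hBt : Bᵀ = B := by
        rw [hB]; ext i j; fin_cases i <;> fin_cases j <;> rfl
      have hred : B * N * Bᵀ = M := by
        rw [hN, hBt]
        ext i j; fin_cases i <;> fin_cases j <;>
          simp [hB, hM, Matrix.transpose_apply, Matrix.mul_apply, Fin.sum_univ_two, hq', hp'] <;> ring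
      -- M satisfies hypotheses
      have hMsym : M.IsSymm := by
        rw [hM]; ext i j; fin_cases i <;> fin_cases j <;> rfl
      have hMne : M ≠ 0 := by
        intro h
        have : M 0 0 = 0 := by rw [h]; simp
        rw [hM] at this; simp at this; exact hr this
      have hMdet : M.det = 0 := by
        rw [hM, Matrix.det_fin_two_of, hq', hp']; ring_nf; linarith [hdet2]
      have hrp' : r * p' = q' ^ 2 := by rw [hq', hp']; ring_nf; linarith [hdet2]
      have habs : 4 * |p'| ≤ |r| := by
        have e1 : |r| * |p'| = q' ^ 2 := by
          rw [← abs_mul, hrp']; exact abs_of_nonneg (sq_nonneg _)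
        have e2 : (2 * |q'|) * (2 * |q'|) ≤ |r| * |r| :=
          mul_self_le_mul_self (by positivity) hk
        have e3 : |q'| * |q'| = q' ^ 2 := by rw [← sq_abs q']; ring
        nlinarith [e1, e2, e3, abs_pos.mpr hr, abs_nonneg p']
      have hbound : (M 1 1).natAbs ≤ n := by
        have h1 : M 1 1 = p' := by rw [hM]; simp
        rw [h1]
        have h2 : |p'| = (p'.natAbs : ℤ) := Int.abs_eq_natAbs p'
        have h3 : |r| = (r.natAbs : ℤ) := Int.abs_eq_natAbs r
        rw [h2, h3] at habs
        have hbr : r.natAbs ≤ n + 1 := hb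
        have hrne : r.natAbs ≠ 0 := Int.natAbs_ne_zero.mpr hr
        omega
      obtain ⟨a, ha, A', hA'mem, hA'⟩ := ih M hMsym hMne hMdet hbound
      refine ⟨a, ha, A' * (um * tk k), mul_mem hA'mem (mul_mem um_mem (tk_mem k)), ?_⟩
      have hgm : ((um * tk k : GL (Fin 2) ℤ) : Matrix (Fin 2) (Fin 2) ℤ) = B := by
        rw [Units.val_mul]
        show !![(0:ℤ),1;1,0] * !![1,k;0,1] = B
        rw [hB]; ext i j; fin_cases i <;> fin_cases j <;>
          simp [Matrix.mul_apply, Fin.sum_univ_two]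
      rw [Units.val_mul, hgm]
      rw [conj_conj (A' : Matrix (Fin 2) (Fin 2) ℤ) B N M hred]
      exact hA'

lemma uniq_aux (a b : ℤ) (hb : b ≠ 0) (C : Matrix (Fin 2) (Fin 2) ℤ) (hC : IsUnit C.det)
    (h : C * !![b, 0; 0, 0] * Cᵀ = !![a, 0; 0, 0]) : a = b := by
  have key : ∀ i j : Fin 2, (C * !![b, 0; 0, 0] * Cᵀ) i j = C i 0 * b * C j 0 := by
    intro i j
    simp [Matrix.mul_apply, Fin.sum_univ_two, Matrix.transpose_apply]
  have h11 : C 1 0 * b * C 1 0 = 0 := by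
    rw [← key 1 1, h]; rfl
  have hC10 : C 1 0 = 0 := by
    rcases mul_eq_zero.mp h11 with h' | h'
    · rcases mul_eq_zero.mp h' with h'' | h''
      · exact h''
      · exact absurd h'' hb
    · exact h'
  have h00 : C 0 0 * b * C 0 0 = a := by rw [← key 0 0, h]; rfl
  have hdetC : C.det = C 0 0 * C 1 1 := by
    rw [Matrix.det_fin_two, hC10]; ring
  have hu : IsUnit (C 0 0) := isUnit_of_mul_isUnit_left (by rwa [← hdetC])
  rcases Int.isUnit_iff.mp hu with h' | h' <;> rw [h'] at h00 <;> linarith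

/-- Every nonzero symmetric integer 2×2 matrix `N` with `det N = 0` satisfies
`A N Aᵀ = [[a,0],[0,0]]` for some `A` in the subgroup of `GL₂(ℤ)` generated by
`r₋₁, r₀, r₁` and a unique nonzero integer `a`: every light-cone root of `F` is
Weyl-equivalent to a unique level 0 light-cone root `-a(α₀+α₁)`. -/
theorem stmt_5 (N : Matrix (Fin 2) (Fin 2) ℤ) (hsym : N.IsSymm) (hne : N ≠ 0)
    (hdet : N.det = 0) :
    ∃! a : ℤ, a ≠ 0 ∧ ∃ A ∈ Subgroup.closure {um, u0, u1},
      (A : Matrix (Fin 2) (Fin 2) ℤ) * N * ((A : Matrix (Fin 2) (Fin 2) ℤ))ᵀ =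
        !![a, 0; 0, 0] := by
  obtain ⟨a₀, ha₀, A₀, hA₀mem, hA₀⟩ := reduce (N 1 1).natAbs N hsym hne hdet le_rfl
  refine ⟨a₀, ⟨ha₀, A₀, hA₀mem, hA₀⟩, ?_⟩
  rintro a ⟨ha, A, hAmem, hA⟩
  set C : Matrix (Fin 2) (Fin 2) ℤ := (A : Matrix (Fin 2) (Fin 2) ℤ) *
    ((A₀⁻¹ : GL (Fin 2) ℤ) : Matrix (Fin 2) (Fin 2) ℤ) with hCdef
  have hCu : C = ((A * A₀⁻¹ : GL (Fin 2) ℤ) : Matrix (Fin 2) (Fin 2) ℤ) := by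
    rw [Units.val_mul]
  have hCdetu : IsUnit C.det := by
    rw [hCu]
    exact (Matrix.isUnit_iff_isUnit_det _).mp (A * A₀⁻¹).isUnit
  have hCA : C * ((A₀ : GL (Fin 2) ℤ) : Matrix (Fin 2) (Fin 2) ℤ) =
      (A : Matrix (Fin 2) (Fin 2) ℤ) := by
    rw [hCdef, mul_assoc, ← Units.val_mul, inv_mul_cancel, Units.val_one, mul_one]
  have hkey : C * !![a₀, 0; 0, 0] * Cᵀ = !![a, 0; 0, 0] := by
    have := conj_conj C ((A₀ : GL (Fin 2) ℤ) : Matrix (Fin 2) (Fin 2) ℤ) N !![a₀, 0; 0, 0] hA₀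
    rw [hCA] at this
    rw [← this, hA]
  exact uniq_aux a a₀ ha₀ C hCdetu hkey
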